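/- Let U ⊆ ℂ be open, H = H₀ ⊕ H₁ an orthogonal decomposition of a complex Hilbert space into closed subspaces, and α ∈ (0,∞)^{2×2}. For any (A,B,C,D) ∈ 𝒜(U,α₀₀,α₁₁) × ℬ(U,α₀₁) × 𝒞(U,α₁₀) × 𝒟(U,α₀₀,α₁₁), the function M defined blockwise by M(z) := [[A(z)⁻¹, A(z)⁻¹B(z)], [C(z)A(z)⁻¹, D(z) + C(z)A(z)⁻¹B(z)]] is holomorphic U → L(H), each M(z) is boundedly invertible with inverse [[A(z) + B(z)D(z)⁻¹C(z), −B(z)D(z)⁻¹], [−D(z)⁻¹C(z), D(z)⁻¹]], M ∈ 𝔐(U,α), and M is the unique element of 𝔐(U) with Λ₀₀(M) = A, Λ₀₁(M) = B, Λ₁₀(M) = C and Λ₁₁(M) = D. In particular (Λ₀₀,Λ₀₁,Λ₁₀,Λ₁₁) is a bijection from 𝔐(U,α) onto 𝒜(U,α₀₀,α₁₁) × ℬ(U,α₀₁) × 𝒞(U,α₁₀) × 𝒟(U,α₀₀,α₁₁). -/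

import Mathlib

noncomputable section
open Filter Topology ContinuousLinearMap

namespace Paper

/-- `Re S ≥ c` for a bounded operator on a complex Hilbert space:
`Re⟨Sφ,φ⟩ ≥ c‖φ‖²` for all `φ`. -/
def ReGE {K : Type*} [NormedAddCommGroup K] [InnerProductSpace ℂ K]
    (S : K →L[ℂ] K) (c : ℝ) : Prop :=
  ∀ φ : K, c * ‖φ‖ ^ 2 ≤ (inner ℂ (S φ) φ : ℂ).re

variable {H : Type*} [NormedAddCommGroup H] [InnerProductSpace ℂ H] [CompleteSpace H]

/-- Block components of `M ∈ L(H)` w.r.t. the orthogonal decomposition `H = H₀ ⊕ H₀ᗮ`: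
`M_ij = P_i ∘ M ∘ ι_j`. -/
def blk00 (H₀ : Submodule ℂ H) [CompleteSpace H₀] (M : H →L[ℂ] H) : H₀ →L[ℂ] H₀ :=
  (Submodule.orthogonalProjectionOnto H₀) ∘L M ∘L H₀.subtypeL

def blk01 (H₀ : Submodule ℂ H) [CompleteSpace H₀] (M : H →L[ℂ] H) : H₀ᗮ →L[ℂ] H₀ :=
  (Submodule.orthogonalProjectionOnto H₀) ∘L M ∘L H₀ᗮ.subtypeL

def blk10 (H₀ : Submodule ℂ H) [CompleteSpace H₀] (M : H →L[ℂ] H) : H₀ →L[ℂ] H₀ᗮ :=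
  (Submodule.orthogonalProjectionOnto H₀ᗮ) ∘L M ∘L H₀.subtypeL

def blk11 (H₀ : Submodule ℂ H) [CompleteSpace H₀] (M : H →L[ℂ] H) : H₀ᗮ →L[ℂ] H₀ᗮ :=
  (Submodule.orthogonalProjectionOnto H₀ᗮ) ∘L M ∘L H₀ᗮ.subtypeL

/-- `M₀₀⁻¹` (via `Ring.inverse`, which is the genuine inverse when `M₀₀` is invertible). -/
def schur00 (H₀ : Submodule ℂ H) [CompleteSpace H₀] (M : H →L[ℂ] H) : H₀ →L[ℂ] H₀ :=
  Ring.inverse (blk00 H₀ M)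

/-- `M₁₀M₀₀⁻¹`. -/
def schur10 (H₀ : Submodule ℂ H) [CompleteSpace H₀] (M : H →L[ℂ] H) : H₀ →L[ℂ] H₀ᗮ :=
  blk10 H₀ M ∘L schur00 H₀ M

/-- `M₀₀⁻¹M₀₁`. -/
def schur01 (H₀ : Submodule ℂ H) [CompleteSpace H₀] (M : H →L[ℂ] H) : H₀ᗮ →L[ℂ] H₀ :=
  schur00 H₀ M ∘L blk01 H₀ M

/-- `M₁₁ − M₁₀M₀₀⁻¹M₀₁`. -/
def schur11 (H₀ : Submodule ℂ H) [CompleteSpace H₀] (M : H →L[ℂ] H) : H₀ᗮ →L[ℂ] H₀ᗮ :=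
  blk11 H₀ M - blk10 H₀ M ∘L schur00 H₀ M ∘L blk01 H₀ M

/-- `M ∈ ℳ(H₀,H₁)`: both `M₀₀` and `M` are boundedly invertible. -/
def MemM (H₀ : Submodule ℂ H) [CompleteSpace H₀] (M : H →L[ℂ] H) : Prop :=
  IsUnit (blk00 H₀ M) ∧ IsUnit M

/-- `M ∈ ℳ(α)`. -/
def MemMa (H₀ : Submodule ℂ H) [CompleteSpace H₀] (a00 a01 a10 a11 : ℝ)
    (M : H →L[ℂ] H) : Prop :=
  MemM H₀ M ∧ ReGE (blk00 H₀ M) a00 ∧ ReGE (schur00 H₀ M) (1 / a11) ∧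
    ‖schur10 H₀ M‖ ≤ a10 ∧ ‖schur01 H₀ M‖ ≤ a01 ∧
    ReGE (schur11 H₀ M) a00 ∧ ReGE (Ring.inverse (schur11 H₀ M)) (1 / a11)

/-- Holomorphy of a function defined on (the subtype of) a set `U ⊆ ℂ`:
it extends to a function `ℂ → E` differentiable on `U`. -/
def HolFn (U : Set ℂ) {E : Type*} [NormedAddCommGroup E] [NormedSpace ℂ E]
    (f : ↥U → E) : Prop :=
  ∃ g : ℂ → E, DifferentiableOn ℂ g U ∧ ∀ z : ↥U, f z = g (z : ℂ)

/-- The topology of locally uniform (compact) convergence on functions `↥U → E`. -/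
def kc (U : Set ℂ) (E : Type*) [UniformSpace E] : TopologicalSpace (↥U → E) :=
  (UniformOnFun.uniformSpace ↥U E {K : Set ↥U | IsCompact K}).toTopologicalSpace

/-- The locally uniform weak operator topology `𝒯_Λ` on operator-valued functions on `U`:
the initial topology w.r.t. `f ↦ (z ↦ ⟨f(z)φ,ψ⟩) ∈ Hol(U,ℂ)` (compact convergence). -/
def luwot (U : Set ℂ) (X Y : Type*) [NormedAddCommGroup X] [InnerProductSpace ℂ X]
    [NormedAddCommGroup Y] [InnerProductSpace ℂ Y] :
    TopologicalSpace (↥U → (X →L[ℂ] Y)) :=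
  ⨅ (p : X × Y),
    TopologicalSpace.induced (fun f => fun z : ↥U => (inner ℂ p.2 (f z p.1) : ℂ)) (kc U ℂ)

/-- `𝔐(U)`: the holomorphic functions `U → L(H)` taking values in `ℳ(H₀,H₁)`. -/
def MU (U : Set ℂ) (H₀ : Submodule ℂ H) [CompleteSpace H₀] :
    Set (↥U → (H →L[ℂ] H)) :=
  {M | HolFn U M ∧ ∀ z : ↥U, MemM H₀ (M z)}

/-- `𝔐(U,α)`: the holomorphic functions `U → L(H)` taking values in `ℳ(α)`. -/
def MUa (U : Set ℂ) (H₀ : Submodule ℂ H) [CompleteSpace H₀] (a00 a01 a10 a11 : ℝ) :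
    Set (↥U → (H →L[ℂ] H)) :=
  {M | HolFn U M ∧ ∀ z : ↥U, MemMa H₀ a00 a01 a10 a11 (M z)}

/-- The parameterised nonlocal H-topology (parameterised Schur topology)
`τ_Hol(H₀,H₁)`: the initial topology w.r.t. the four Schur-component maps, each into
the corresponding space of operator-valued functions carrying the locally uniform weak
operator topology. -/
def tauHol (U : Set ℂ) (H₀ : Submodule ℂ H) [CompleteSpace H₀] :
    TopologicalSpace (↥U → (H →L[ℂ] H)) :=
  TopologicalSpace.induced (fun M (z : ↥U) => schur00 H₀ (M z)) (luwot U H₀ H₀) ⊓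
    TopologicalSpace.induced (fun M (z : ↥U) => schur10 H₀ (M z)) (luwot U H₀ ↥H₀ᗮ) ⊓
    TopologicalSpace.induced (fun M (z : ↥U) => schur01 H₀ (M z)) (luwot U ↥H₀ᗮ H₀) ⊓
    TopologicalSpace.induced (fun M (z : ↥U) => schur11 H₀ (M z)) (luwot U ↥H₀ᗮ ↥H₀ᗮ)

/-- `𝒜(U,α₀₀,α₁₁)`. -/
def Aset (U : Set ℂ) (H₀ : Submodule ℂ H) [CompleteSpace H₀] (a00 a11 : ℝ) :
    Set (↥U → (H₀ →L[ℂ] H₀)) :=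
  {A | HolFn U A ∧ ∀ z : ↥U,
    IsUnit (A z) ∧ ReGE (Ring.inverse (A z)) a00 ∧ ReGE (A z) (1 / a11)}

/-- `ℬ(U,α₀₁) ⊆ Hol(U, L(H₁,H₀))`. -/
def Bset (U : Set ℂ) (H₀ : Submodule ℂ H) [CompleteSpace H₀] (a01 : ℝ) :
    Set (↥U → (↥H₀ᗮ →L[ℂ] H₀)) :=
  {B | HolFn U B ∧ ∀ z : ↥U, ‖B z‖ ≤ a01}

/-- `𝒞(U,α₁₀) ⊆ Hol(U, L(H₀,H₁))`. -/
def Cset (U : Set ℂ) (H₀ : Submodule ℂ H) [CompleteSpace H₀] (a10 : ℝ) :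
    Set (↥U → (H₀ →L[ℂ] ↥H₀ᗮ)) :=
  {C | HolFn U C ∧ ∀ z : ↥U, ‖C z‖ ≤ a10}

/-- `𝒟(U,α₀₀,α₁₁)`. -/
def Dset (U : Set ℂ) (H₀ : Submodule ℂ H) [CompleteSpace H₀] (a00 a11 : ℝ) :
    Set (↥U → (↥H₀ᗮ →L[ℂ] ↥H₀ᗮ)) :=
  {D | HolFn U D ∧ ∀ z : ↥U,
    IsUnit (D z) ∧ ReGE (D z) a00 ∧ ReGE (Ring.inverse (D z)) (1 / a11)}

/-- Assemble an operator on `H = H₀ ⊕ H₀ᗮ` from its four blocks. -/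
def assemble (H₀ : Submodule ℂ H) [CompleteSpace H₀]
    (P : H₀ →L[ℂ] H₀) (Q : ↥H₀ᗮ →L[ℂ] H₀) (R : H₀ →L[ℂ] ↥H₀ᗮ) (S : ↥H₀ᗮ →L[ℂ] ↥H₀ᗮ) :
    H →L[ℂ] H :=
  H₀.subtypeL ∘L P ∘L (Submodule.orthogonalProjectionOnto H₀) +
    H₀.subtypeL ∘L Q ∘L (Submodule.orthogonalProjectionOnto H₀ᗮ) +
    H₀ᗮ.subtypeL ∘L R ∘L (Submodule.orthogonalProjectionOnto H₀) +
    H₀ᗮ.subtypeL ∘L S ∘L (Submodule.orthogonalProjectionOnto H₀ᗮ)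

/-- The block operator `M(z) = [[A⁻¹, A⁻¹B], [CA⁻¹, D + CA⁻¹B]]` built from
`(A,B,C,D)`. -/
def assembleM (U : Set ℂ) (H₀ : Submodule ℂ H) [CompleteSpace H₀]
    (A : ↥U → (H₀ →L[ℂ] H₀)) (B : ↥U → (↥H₀ᗮ →L[ℂ] H₀))
    (C : ↥U → (H₀ →L[ℂ] ↥H₀ᗮ)) (D : ↥U → (↥H₀ᗮ →L[ℂ] ↥H₀ᗮ)) :
    ↥U → (H →L[ℂ] H) := fun z =>
  assemble H₀ (Ring.inverse (A z)) (Ring.inverse (A z) ∘L B z)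
    (C z ∘L Ring.inverse (A z)) (D z + C z ∘L Ring.inverse (A z) ∘L B z)

/-- The block operator `[[A + BD⁻¹C, −BD⁻¹], [−D⁻¹C, D⁻¹]]`, the pointwise inverse of
`assembleM`. -/
def assembleMinv (U : Set ℂ) (H₀ : Submodule ℂ H) [CompleteSpace H₀]
    (A : ↥U → (H₀ →L[ℂ] H₀)) (B : ↥U → (↥H₀ᗮ →L[ℂ] H₀))
    (C : ↥U → (H₀ →L[ℂ] ↥H₀ᗮ)) (D : ↥U → (↥H₀ᗮ →L[ℂ] ↥H₀ᗮ)) :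
    ↥U → (H →L[ℂ] H) := fun z =>
  assemble H₀ (A z + B z ∘L Ring.inverse (D z) ∘L C z) (-(B z ∘L Ring.inverse (D z)))
    (-(Ring.inverse (D z) ∘L C z)) (Ring.inverse (D z))

set_option linter.unusedSectionVars false

section Alg
variable {K L : Type*} [NormedAddCommGroup K] [NormedSpace ℂ K]
  [NormedAddCommGroup L] [NormedSpace ℂ L]

lemma ri_ri {A : K →L[ℂ] K} (hA : IsUnit A) :
    Ring.inverse (Ring.inverse A) = A := by
  obtain ⟨u, rfl⟩ := hA; simp

lemma isUnit_ri {A : K →L[ℂ] K} (hA : IsUnit A) : IsUnit (Ring.inverse A) := by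
  obtain ⟨u, rfl⟩ := hA; rw [Ring.inverse_unit]; exact u⁻¹.isUnit

lemma ri_comp {A : K →L[ℂ] K} (hA : IsUnit A) :
    Ring.inverse A ∘L A = ContinuousLinearMap.id ℂ K := by
  rw [← mul_def, Ring.inverse_mul_cancel _ hA, one_def]

lemma comp_ri {A : K →L[ℂ] K} (hA : IsUnit A) :
    A ∘L Ring.inverse A = ContinuousLinearMap.id ℂ K := by
  rw [← mul_def, Ring.mul_inverse_cancel _ hA, one_def]

lemma ri_cancel_left {A : K →L[ℂ] K} (hA : IsUnit A) (Y : L →L[ℂ] K) :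
    Ring.inverse A ∘L (A ∘L Y) = Y := by
  rw [← ContinuousLinearMap.comp_assoc, ri_comp hA, ContinuousLinearMap.id_comp]

lemma comp_ri_cancel_left {A : K →L[ℂ] K} (hA : IsUnit A) (Y : L →L[ℂ] K) :
    A ∘L (Ring.inverse A ∘L Y) = Y := by
  rw [← ContinuousLinearMap.comp_assoc, comp_ri hA, ContinuousLinearMap.id_comp]

lemma ri_cancel_right {A : K →L[ℂ] K} (hA : IsUnit A) (Y : K →L[ℂ] L) :
    (Y ∘L Ring.inverse A) ∘L A = Y := by
  rw [ContinuousLinearMap.comp_assoc, ri_comp hA, ContinuousLinearMap.comp_id]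

lemma comp_ri_cancel_right {A : K →L[ℂ] K} (hA : IsUnit A) (Y : K →L[ℂ] L) :
    (Y ∘L A) ∘L Ring.inverse A = Y := by
  rw [ContinuousLinearMap.comp_assoc, comp_ri hA, ContinuousLinearMap.comp_id]

end Alg

section Blocks
variable (H₀ : Submodule ℂ H) [CompleteSpace H₀]

lemma pe01 (v : ↥H₀ᗮ) : Submodule.orthogonalProjectionOnto H₀ (v : H) = 0 :=
  Submodule.orthogonalProjectionOnto_apply_of_mem_orthogonal v.2

lemma pe10 (v : H₀) : Submodule.orthogonalProjectionOnto H₀ᗮ (v : H) = 0 :=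
  Submodule.orthogonalProjectionOnto_apply_of_mem_orthogonal
    (Submodule.le_orthogonal_orthogonal H₀ v.2)

variable (P : H₀ →L[ℂ] H₀) (Q : ↥H₀ᗮ →L[ℂ] H₀) (R : H₀ →L[ℂ] ↥H₀ᗮ) (S : ↥H₀ᗮ →L[ℂ] ↥H₀ᗮ)

lemma op_add_op (x : H) :
    ((Submodule.orthogonalProjectionOnto H₀ x : H) + (Submodule.orthogonalProjectionOnto H₀ᗮ x : H)) = x :=
  H₀.starProjection_add_starProjection_orthogonal x

lemma blk00_assemble : blk00 H₀ (assemble H₀ P Q R S) = P := by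
  ext v
  simp [blk00, assemble, pe01, pe10]

lemma blk01_assemble : blk01 H₀ (assemble H₀ P Q R S) = Q := by
  ext v
  simp [blk01, assemble, pe01, pe10]

lemma blk10_assemble : blk10 H₀ (assemble H₀ P Q R S) = R := by
  ext v
  simp [blk10, assemble, pe01, pe10]

lemma blk11_assemble : blk11 H₀ (assemble H₀ P Q R S) = S := by
  ext v
  simp [blk11, assemble, pe01, pe10]

lemma assemble_blocks (M : H →L[ℂ] H) :
    assemble H₀ (blk00 H₀ M) (blk01 H₀ M) (blk10 H₀ M) (blk11 H₀ M) = M := by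
  ext x
  have hx := op_add_op H₀ x
  have h0 := op_add_op H₀
    (M (Submodule.orthogonalProjectionOnto H₀ x))
  have h1 := op_add_op H₀
    (M ((Submodule.orthogonalProjectionOnto H₀ᗮ x : H)))
  simp only [assemble, blk00, blk01, blk10, blk11, ContinuousLinearMap.add_apply,
    ContinuousLinearMap.coe_comp', Function.comp_apply, Submodule.subtypeL_apply]
  rw [show ∀ a b c d : H, a + b + c + d = (a + c) + (b + d) from fun a b c d => by abel]
  rw [h0, h1, ← map_add, hx]

lemma assemble_comp (P' : H₀ →L[ℂ] H₀) (Q' : ↥H₀ᗮ →L[ℂ] H₀) (R' : H₀ →L[ℂ] ↥H₀ᗮ)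
    (S' : ↥H₀ᗮ →L[ℂ] ↥H₀ᗮ) :
    assemble H₀ P Q R S ∘L assemble H₀ P' Q' R' S' =
      assemble H₀ (P ∘L P' + Q ∘L R') (P ∘L Q' + Q ∘L S')
        (R ∘L P' + S ∘L R') (R ∘L Q' + S ∘L S') := by
  ext x
  simp [assemble, pe01, pe10]
  abel

lemma assemble_one : assemble H₀ 1 0 0 1 = ContinuousLinearMap.id ℂ H := by
  rw [Submodule.id_eq_sum_starProjection_self_orthogonalComplement (K := H₀)]
  ext x
  simp [assemble]

end Blocks

section Inv
variable (H₀ : Submodule ℂ H) [CompleteSpace H₀]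
variable (A : H₀ →L[ℂ] H₀) (B : ↥H₀ᗮ →L[ℂ] H₀) (C : H₀ →L[ℂ] ↥H₀ᗮ) (D : ↥H₀ᗮ →L[ℂ] ↥H₀ᗮ)

lemma bm00 (hA : IsUnit A) (hD : IsUnit D) :
    Ring.inverse A ∘L (A + B ∘L Ring.inverse D ∘L C) +
      (Ring.inverse A ∘L B) ∘L (-(Ring.inverse D ∘L C)) = 1 := by
  simp only [comp_add, add_comp, comp_neg, neg_comp, ContinuousLinearMap.comp_assoc,
    ri_cancel_left hA, comp_ri_cancel_left hA, ri_cancel_left hD, comp_ri_cancel_left hD,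
    ri_comp hA, comp_ri hA, ri_comp hD, comp_ri hD, ContinuousLinearMap.comp_id,
    ContinuousLinearMap.id_comp, ← ContinuousLinearMap.one_def]
  abel

lemma bm01 (hA : IsUnit A) (hD : IsUnit D) :
    Ring.inverse A ∘L (-(B ∘L Ring.inverse D)) +
      (Ring.inverse A ∘L B) ∘L Ring.inverse D = 0 := by
  simp only [comp_add, add_comp, comp_neg, neg_comp, ContinuousLinearMap.comp_assoc,
    ri_cancel_left hA, comp_ri_cancel_left hA, ri_cancel_left hD, comp_ri_cancel_left hD,
    ri_comp hA, comp_ri hA, ri_comp hD, comp_ri hD, ContinuousLinearMap.comp_id,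
    ContinuousLinearMap.id_comp]
  abel

lemma bm10 (hA : IsUnit A) (hD : IsUnit D) :
    (C ∘L Ring.inverse A) ∘L (A + B ∘L Ring.inverse D ∘L C) +
      (D + C ∘L Ring.inverse A ∘L B) ∘L (-(Ring.inverse D ∘L C)) = 0 := by
  simp only [comp_add, add_comp, comp_neg, neg_comp, ContinuousLinearMap.comp_assoc,
    ri_cancel_left hA, comp_ri_cancel_left hA, ri_cancel_left hD, comp_ri_cancel_left hD,
    ri_comp hA, comp_ri hA, ri_comp hD, comp_ri hD, ContinuousLinearMap.comp_id,
    ContinuousLinearMap.id_comp]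
  abel

lemma bm11 (hA : IsUnit A) (hD : IsUnit D) :
    (C ∘L Ring.inverse A) ∘L (-(B ∘L Ring.inverse D)) +
      (D + C ∘L Ring.inverse A ∘L B) ∘L Ring.inverse D = 1 := by
  simp only [comp_add, add_comp, comp_neg, neg_comp, ContinuousLinearMap.comp_assoc,
    ri_cancel_left hA, comp_ri_cancel_left hA, ri_cancel_left hD, comp_ri_cancel_left hD,
    ri_comp hA, comp_ri hA, ri_comp hD, comp_ri hD, ContinuousLinearMap.comp_id,
    ContinuousLinearMap.id_comp, ← ContinuousLinearMap.one_def]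
  abel

lemma bn00 (hA : IsUnit A) (hD : IsUnit D) :
    (A + B ∘L Ring.inverse D ∘L C) ∘L Ring.inverse A +
      (-(B ∘L Ring.inverse D)) ∘L (C ∘L Ring.inverse A) = 1 := by
  simp only [comp_add, add_comp, comp_neg, neg_comp, ContinuousLinearMap.comp_assoc,
    ri_cancel_left hA, comp_ri_cancel_left hA, ri_cancel_left hD, comp_ri_cancel_left hD,
    ri_comp hA, comp_ri hA, ri_comp hD, comp_ri hD, ContinuousLinearMap.comp_id,
    ContinuousLinearMap.id_comp, ← ContinuousLinearMap.one_def]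
  abel

lemma bn01 (hA : IsUnit A) (hD : IsUnit D) :
    (A + B ∘L Ring.inverse D ∘L C) ∘L (Ring.inverse A ∘L B) +
      (-(B ∘L Ring.inverse D)) ∘L (D + C ∘L Ring.inverse A ∘L B) = 0 := by
  simp only [comp_add, add_comp, comp_neg, neg_comp, ContinuousLinearMap.comp_assoc,
    ri_cancel_left hA, comp_ri_cancel_left hA, ri_cancel_left hD, comp_ri_cancel_left hD,
    ri_comp hA, comp_ri hA, ri_comp hD, comp_ri hD, ContinuousLinearMap.comp_id,
    ContinuousLinearMap.id_comp]
  abel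

lemma bn10 (hA : IsUnit A) (hD : IsUnit D) :
    (-(Ring.inverse D ∘L C)) ∘L Ring.inverse A +
      Ring.inverse D ∘L (C ∘L Ring.inverse A) = 0 := by
  simp only [comp_add, add_comp, comp_neg, neg_comp, ContinuousLinearMap.comp_assoc,
    ri_cancel_left hA, comp_ri_cancel_left hA, ri_cancel_left hD, comp_ri_cancel_left hD,
    ri_comp hA, comp_ri hA, ri_comp hD, comp_ri hD, ContinuousLinearMap.comp_id,
    ContinuousLinearMap.id_comp]
  abel

lemma bn11 (hA : IsUnit A) (hD : IsUnit D) :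
    (-(Ring.inverse D ∘L C)) ∘L (Ring.inverse A ∘L B) +
      Ring.inverse D ∘L (D + C ∘L Ring.inverse A ∘L B) = 1 := by
  simp only [comp_add, add_comp, comp_neg, neg_comp, ContinuousLinearMap.comp_assoc,
    ri_cancel_left hA, comp_ri_cancel_left hA, ri_cancel_left hD, comp_ri_cancel_left hD,
    ri_comp hA, comp_ri hA, ri_comp hD, comp_ri hD, ContinuousLinearMap.comp_id,
    ContinuousLinearMap.id_comp, ← ContinuousLinearMap.one_def]
  abel

end Inv

section Misc
variable {K : Type*} [NormedAddCommGroup K] [InnerProductSpace ℂ K] [CompleteSpace K]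

lemma isUnit_of_reGE_ri (S : K →L[ℂ] K) {c : ℝ} (hc : 0 < c)
    (h : ReGE (Ring.inverse S) c) : IsUnit S := by
  by_cases hu : IsUnit S
  · exact hu
  · rw [Ring.inverse_non_unit _ hu] at h
    have hz : ∀ φ : K, φ = 0 := by
      intro φ
      have h1 := h φ
      simp only [ContinuousLinearMap.zero_apply, inner_zero_left, Complex.zero_re] at h1
      have h2 : ‖φ‖ ^ 2 ≤ 0 := by nlinarith
      have h3 : ‖φ‖ = 0 := by nlinarith [norm_nonneg φ]
      exact norm_eq_zero.mp h3
    have hS : S = 1 := by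
      ext φ
      rw [hz φ]
      simp
    exact hS ▸ isUnit_one

end Misc

section Hol
variable {U : Set ℂ} {E F G : Type*} [NormedAddCommGroup E] [NormedSpace ℂ E]
  [NormedAddCommGroup F] [NormedSpace ℂ F] [NormedAddCommGroup G] [NormedSpace ℂ G]

lemma holFn_const (T : E) : HolFn U (fun _ => T) :=
  ⟨fun _ => T, differentiableOn_const _, fun _ => rfl⟩

lemma HolFn.compCLM {f : ↥U → (F →L[ℂ] G)} {g : ↥U → (E →L[ℂ] F)} (hf : HolFn U f)
    (hg : HolFn U g) : HolFn U (fun z => f z ∘L g z) := by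
  obtain ⟨F1, hF1, hf1⟩ := hf; obtain ⟨G1, hG1, hg1⟩ := hg
  exact ⟨fun w => F1 w ∘L G1 w, hF1.clm_comp hG1, fun z => by simp only [hf1 z, hg1 z]⟩

lemma HolFn.add {f g : ↥U → E} (hf : HolFn U f) (hg : HolFn U g) :
    HolFn U (fun z => f z + g z) := by
  obtain ⟨F1, hF1, hf1⟩ := hf; obtain ⟨G1, hG1, hg1⟩ := hg
  exact ⟨fun w => F1 w + G1 w, hF1.add hG1, fun z => by simp only [hf1 z, hg1 z]⟩

lemma HolFn.sub {f g : ↥U → E} (hf : HolFn U f) (hg : HolFn U g) :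
    HolFn U (fun z => f z - g z) := by
  obtain ⟨F1, hF1, hf1⟩ := hf; obtain ⟨G1, hG1, hg1⟩ := hg
  exact ⟨fun w => F1 w - G1 w, hF1.sub hG1, fun z => by simp only [hf1 z, hg1 z]⟩

lemma HolFn.ringInverse [CompleteSpace E] {f : ↥U → (E →L[ℂ] E)} (hf : HolFn U f)
    (hu : ∀ z, IsUnit (f z)) : HolFn U (fun z => Ring.inverse (f z)) := by
  obtain ⟨g, hg, hfg⟩ := hf
  refine ⟨fun w => Ring.inverse (g w), hg.inverse (fun w hw => ?_), fun z => by simp only [hfg z]⟩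
  rw [← hfg ⟨w, hw⟩]
  exact hu ⟨w, hw⟩

end Hol

section HolBlocks
variable {U : Set ℂ} (H₀ : Submodule ℂ H) [CompleteSpace H₀]

lemma HolFn.assembleF {P : ↥U → (H₀ →L[ℂ] H₀)} {Q : ↥U → (↥H₀ᗮ →L[ℂ] H₀)}
    {R : ↥U → (H₀ →L[ℂ] ↥H₀ᗮ)} {S : ↥U → (↥H₀ᗮ →L[ℂ] ↥H₀ᗮ)}
    (hP : HolFn U P) (hQ : HolFn U Q) (hR : HolFn U R) (hS : HolFn U S) :
    HolFn U (fun z => assemble H₀ (P z) (Q z) (R z) (S z)) :=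
  ((((holFn_const H₀.subtypeL).compCLM (hP.compCLM (holFn_const _))).add
    ((holFn_const H₀.subtypeL).compCLM (hQ.compCLM (holFn_const _)))).add
    ((holFn_const H₀ᗮ.subtypeL).compCLM (hR.compCLM (holFn_const _)))).add
    ((holFn_const H₀ᗮ.subtypeL).compCLM (hS.compCLM (holFn_const _)))

lemma holFn_blk00 {M : ↥U → (H →L[ℂ] H)} (hM : HolFn U M) :
    HolFn U (fun z => blk00 H₀ (M z)) :=
  (holFn_const (Submodule.orthogonalProjectionOnto H₀)).compCLM (hM.compCLM (holFn_const _))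

lemma holFn_blk01 {M : ↥U → (H →L[ℂ] H)} (hM : HolFn U M) :
    HolFn U (fun z => blk01 H₀ (M z)) :=
  (holFn_const (Submodule.orthogonalProjectionOnto H₀)).compCLM (hM.compCLM (holFn_const _))

lemma holFn_blk10 {M : ↥U → (H →L[ℂ] H)} (hM : HolFn U M) :
    HolFn U (fun z => blk10 H₀ (M z)) :=
  (holFn_const (Submodule.orthogonalProjectionOnto H₀ᗮ)).compCLM (hM.compCLM (holFn_const _))

lemma holFn_blk11 {M : ↥U → (H →L[ℂ] H)} (hM : HolFn U M) :
    HolFn U (fun z => blk11 H₀ (M z)) :=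
  (holFn_const (Submodule.orthogonalProjectionOnto H₀ᗮ)).compCLM (hM.compCLM (holFn_const _))

lemma holFn_schur00 {M : ↥U → (H →L[ℂ] H)} (hM : HolFn U M)
    (hu : ∀ z, IsUnit (blk00 H₀ (M z))) :
    HolFn U (fun z => schur00 H₀ (M z)) :=
  (holFn_blk00 H₀ hM).ringInverse hu

lemma holFn_schur01 {M : ↥U → (H →L[ℂ] H)} (hM : HolFn U M)
    (hu : ∀ z, IsUnit (blk00 H₀ (M z))) :
    HolFn U (fun z => schur01 H₀ (M z)) :=
  (holFn_schur00 H₀ hM hu).compCLM (holFn_blk01 H₀ hM)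

lemma holFn_schur10 {M : ↥U → (H →L[ℂ] H)} (hM : HolFn U M)
    (hu : ∀ z, IsUnit (blk00 H₀ (M z))) :
    HolFn U (fun z => schur10 H₀ (M z)) :=
  (holFn_blk10 H₀ hM).compCLM (holFn_schur00 H₀ hM hu)

lemma holFn_schur11 {M : ↥U → (H →L[ℂ] H)} (hM : HolFn U M)
    (hu : ∀ z, IsUnit (blk00 H₀ (M z))) :
    HolFn U (fun z => schur11 H₀ (M z)) :=
  (holFn_blk11 H₀ hM).sub
    ((holFn_blk10 H₀ hM).compCLM ((holFn_schur00 H₀ hM hu).compCLM (holFn_blk01 H₀ hM)))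

end HolBlocks

section AsmM
variable (H₀ : Submodule ℂ H) [CompleteSpace H₀]
variable (A : H₀ →L[ℂ] H₀) (B : ↥H₀ᗮ →L[ℂ] H₀) (C : H₀ →L[ℂ] ↥H₀ᗮ) (D : ↥H₀ᗮ →L[ℂ] ↥H₀ᗮ)

lemma asm_comp_inv (hA : IsUnit A) (hD : IsUnit D) :
    assemble H₀ (Ring.inverse A) (Ring.inverse A ∘L B) (C ∘L Ring.inverse A)
        (D + C ∘L Ring.inverse A ∘L B) ∘L
      assemble H₀ (A + B ∘L Ring.inverse D ∘L C) (-(B ∘L Ring.inverse D))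
        (-(Ring.inverse D ∘L C)) (Ring.inverse D) = ContinuousLinearMap.id ℂ H := by
  rw [assemble_comp, bm00 (hA := hA) (hD := hD), bm01 (hA := hA) (hD := hD), bm10 (hA := hA) (hD := hD),
    bm11 (hA := hA) (hD := hD), assemble_one]

lemma inv_comp_asm (hA : IsUnit A) (hD : IsUnit D) :
    assemble H₀ (A + B ∘L Ring.inverse D ∘L C) (-(B ∘L Ring.inverse D))
        (-(Ring.inverse D ∘L C)) (Ring.inverse D) ∘L
      assemble H₀ (Ring.inverse A) (Ring.inverse A ∘L B) (C ∘L Ring.inverse A)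
        (D + C ∘L Ring.inverse A ∘L B) = ContinuousLinearMap.id ℂ H := by
  rw [assemble_comp, bn00 (hA := hA) (hD := hD), bn01 (hA := hA) (hD := hD), bn10 (hA := hA) (hD := hD),
    bn11 (hA := hA) (hD := hD), assemble_one]

lemma schur00_asm (hA : IsUnit A) :
    schur00 H₀ (assemble H₀ (Ring.inverse A) (Ring.inverse A ∘L B) (C ∘L Ring.inverse A)
      (D + C ∘L Ring.inverse A ∘L B)) = A := by
  rw [schur00, blk00_assemble, ri_ri hA]

lemma schur01_asm (hA : IsUnit A) :
    schur01 H₀ (assemble H₀ (Ring.inverse A) (Ring.inverse A ∘L B) (C ∘L Ring.inverse A)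
      (D + C ∘L Ring.inverse A ∘L B)) = B := by
  rw [schur01, schur00, blk00_assemble, blk01_assemble, ri_ri hA]
  exact comp_ri_cancel_left hA B

lemma schur10_asm (hA : IsUnit A) :
    schur10 H₀ (assemble H₀ (Ring.inverse A) (Ring.inverse A ∘L B) (C ∘L Ring.inverse A)
      (D + C ∘L Ring.inverse A ∘L B)) = C := by
  rw [schur10, schur00, blk00_assemble, blk10_assemble, ri_ri hA]
  exact ri_cancel_right hA C

lemma schur11_asm (hA : IsUnit A) :
    schur11 H₀ (assemble H₀ (Ring.inverse A) (Ring.inverse A ∘L B) (C ∘L Ring.inverse A)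
      (D + C ∘L Ring.inverse A ∘L B)) = D := by
  rw [schur11, schur00, blk00_assemble, blk01_assemble, blk10_assemble, blk11_assemble,
    ri_ri hA, comp_ri_cancel_left hA B, ContinuousLinearMap.comp_assoc]
  exact add_sub_cancel_right _ _

end AsmM
/-- For `(A,B,C,D) ∈ 𝒜 × ℬ × 𝒞 × 𝒟`, the blockwise-defined `M` is
holomorphic, pointwise boundedly invertible with the stated blockwise inverse, belongs to
`𝔐(U,α)` and is the unique element of `𝔐(U)` whose Schur components are `(A,B,C,D)`;
in particular `(Λ₀₀,Λ₀₁,Λ₁₀,Λ₁₁)` is a bijection from `𝔐(U,α)` onto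
`𝒜 × ℬ × 𝒞 × 𝒟`. -/
theorem statement_8 (U : Set ℂ) (hU : IsOpen U) (H₀ : Submodule ℂ H) [CompleteSpace H₀]
    (a00 a01 a10 a11 : ℝ) (ha00 : 0 < a00) (ha01 : 0 < a01) (ha10 : 0 < a10)
    (ha11 : 0 < a11) :
    (∀ A ∈ Aset U H₀ a00 a11, ∀ B ∈ Bset U H₀ a01, ∀ C ∈ Cset U H₀ a10,
      ∀ D ∈ Dset U H₀ a00 a11,
      HolFn U (assembleM U H₀ A B C D) ∧
      (∀ z : ↥U,
        assembleM U H₀ A B C D z ∘L assembleMinv U H₀ A B C D z = ContinuousLinearMap.id ℂ H ∧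
        assembleMinv U H₀ A B C D z ∘L assembleM U H₀ A B C D z = ContinuousLinearMap.id ℂ H) ∧
      assembleM U H₀ A B C D ∈ MUa U H₀ a00 a01 a10 a11 ∧
      (fun z : ↥U => schur00 H₀ (assembleM U H₀ A B C D z)) = A ∧
      (fun z : ↥U => schur01 H₀ (assembleM U H₀ A B C D z)) = B ∧
      (fun z : ↥U => schur10 H₀ (assembleM U H₀ A B C D z)) = C ∧
      (fun z : ↥U => schur11 H₀ (assembleM U H₀ A B C D z)) = D ∧
      (∀ N ∈ MU U H₀,
        (fun z : ↥U => schur00 H₀ (N z)) = A → (fun z : ↥U => schur01 H₀ (N z)) = B →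
        (fun z : ↥U => schur10 H₀ (N z)) = C → (fun z : ↥U => schur11 H₀ (N z)) = D →
        N = assembleM U H₀ A B C D)) ∧
    Set.BijOn
      (fun M : ↥U → (H →L[ℂ] H) =>
        ((fun z : ↥U => schur00 H₀ (M z)), (fun z : ↥U => schur01 H₀ (M z)),
          (fun z : ↥U => schur10 H₀ (M z)), (fun z : ↥U => schur11 H₀ (M z))))
      (MUa U H₀ a00 a01 a10 a11)
      ((Aset U H₀ a00 a11) ×ˢ (Bset U H₀ a01) ×ˢ (Cset U H₀ a10) ×ˢ
        (Dset U H₀ a00 a11)) := by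

  have part1 : ∀ A ∈ Aset U H₀ a00 a11, ∀ B ∈ Bset U H₀ a01, ∀ C ∈ Cset U H₀ a10,
      ∀ D ∈ Dset U H₀ a00 a11,
      HolFn U (assembleM U H₀ A B C D) ∧
      (∀ z : ↥U,
        assembleM U H₀ A B C D z ∘L assembleMinv U H₀ A B C D z = ContinuousLinearMap.id ℂ H ∧
        assembleMinv U H₀ A B C D z ∘L assembleM U H₀ A B C D z = ContinuousLinearMap.id ℂ H) ∧
      assembleM U H₀ A B C D ∈ MUa U H₀ a00 a01 a10 a11 ∧
      (fun z : ↥U => schur00 H₀ (assembleM U H₀ A B C D z)) = A ∧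
      (fun z : ↥U => schur01 H₀ (assembleM U H₀ A B C D z)) = B ∧
      (fun z : ↥U => schur10 H₀ (assembleM U H₀ A B C D z)) = C ∧
      (fun z : ↥U => schur11 H₀ (assembleM U H₀ A B C D z)) = D ∧
      (∀ N ∈ MU U H₀,
        (fun z : ↥U => schur00 H₀ (N z)) = A → (fun z : ↥U => schur01 H₀ (N z)) = B →
        (fun z : ↥U => schur10 H₀ (N z)) = C → (fun z : ↥U => schur11 H₀ (N z)) = D →
        N = assembleM U H₀ A B C D) := by
    rintro A ⟨hAhol, hAz⟩ B ⟨hBhol, hBz⟩ C ⟨hChol, hCz⟩ D ⟨hDhol, hDz⟩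
    have hAu : ∀ z : ↥U, IsUnit (A z) := fun z => (hAz z).1
    have hDu : ∀ z : ↥U, IsUnit (D z) := fun z => (hDz z).1
    have hb00 : ∀ z : ↥U, blk00 H₀ (assembleM U H₀ A B C D z) = Ring.inverse (A z) :=
      fun z => blk00_assemble H₀ _ _ _ _
    have hs00 : ∀ z : ↥U, schur00 H₀ (assembleM U H₀ A B C D z) = A z :=
      fun z => schur00_asm H₀ _ _ _ _ (hAu z)
    have hs01 : ∀ z : ↥U, schur01 H₀ (assembleM U H₀ A B C D z) = B z :=
      fun z => schur01_asm H₀ _ _ _ _ (hAu z)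
    have hs10 : ∀ z : ↥U, schur10 H₀ (assembleM U H₀ A B C D z) = C z :=
      fun z => schur10_asm H₀ _ _ _ _ (hAu z)
    have hs11 : ∀ z : ↥U, schur11 H₀ (assembleM U H₀ A B C D z) = D z :=
      fun z => schur11_asm H₀ _ _ _ _ (hAu z)
    have hinv : ∀ z : ↥U,
        assembleM U H₀ A B C D z ∘L assembleMinv U H₀ A B C D z = ContinuousLinearMap.id ℂ H ∧
        assembleMinv U H₀ A B C D z ∘L assembleM U H₀ A B C D z = ContinuousLinearMap.id ℂ H :=
      fun z => ⟨asm_comp_inv H₀ _ _ _ _ (hAu z) (hDu z), inv_comp_asm H₀ _ _ _ _ (hAu z) (hDu z)⟩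
    have hunit : ∀ z : ↥U, IsUnit (assembleM U H₀ A B C D z) := fun z =>
      ⟨⟨assembleM U H₀ A B C D z, assembleMinv U H₀ A B C D z,
        by rw [ContinuousLinearMap.mul_def, ContinuousLinearMap.one_def]; exact (hinv z).1,
        by rw [ContinuousLinearMap.mul_def, ContinuousLinearMap.one_def]; exact (hinv z).2⟩, rfl⟩
    have hHol : HolFn U (assembleM U H₀ A B C D) := by
      have h1 : HolFn U fun z => Ring.inverse (A z) := HolFn.ringInverse hAhol hAu
      exact HolFn.assembleF H₀ h1 (h1.compCLM hBhol) (hChol.compCLM h1)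
        (hDhol.add (hChol.compCLM (h1.compCLM hBhol)))
    have hMUa : assembleM U H₀ A B C D ∈ MUa U H₀ a00 a01 a10 a11 := by
      refine ⟨hHol, fun z => ⟨⟨?_, hunit z⟩, ?_, ?_, ?_, ?_, ?_, ?_⟩⟩
      · rw [hb00 z]; exact isUnit_ri (hAu z)
      · rw [hb00 z]; exact (hAz z).2.1
      · rw [hs00 z]; exact (hAz z).2.2
      · rw [hs10 z]; exact hCz z
      · rw [hs01 z]; exact hBz z
      · rw [hs11 z]; exact (hDz z).2.1
      · rw [hs11 z]; exact (hDz z).2.2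
    refine ⟨hHol, hinv, hMUa, funext hs00, funext hs01, funext hs10, funext hs11, ?_⟩
    rintro N ⟨hNhol, hNz⟩ e00 e01 e10 e11
    funext z
    have hu : IsUnit (blk00 H₀ (N z)) := (hNz z).1
    have e00z : schur00 H₀ (N z) = A z := congrFun e00 z
    have e01z : schur01 H₀ (N z) = B z := congrFun e01 z
    have e10z : schur10 H₀ (N z) = C z := congrFun e10 z
    have e11z : schur11 H₀ (N z) = D z := congrFun e11 z
    have hAuz : IsUnit (A z) := by rw [← e00z]; exact isUnit_ri hu
    have hb00N : blk00 H₀ (N z) = Ring.inverse (A z) := by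
      have h : Ring.inverse (schur00 H₀ (N z)) = blk00 H₀ (N z) := ri_ri hu
      rw [← h, e00z]
    have hb01N : blk01 H₀ (N z) = Ring.inverse (A z) ∘L B z := by
      have h : A z ∘L blk01 H₀ (N z) = B z := by
        rw [← e01z, ← e00z]; rfl
      rw [← h]; exact (ri_cancel_left hAuz _).symm
    have hb10N : blk10 H₀ (N z) = C z ∘L Ring.inverse (A z) := by
      have h : blk10 H₀ (N z) ∘L A z = C z := by
        rw [← e10z, ← e00z]; rfl
      rw [← h]; exact (comp_ri_cancel_right hAuz _).symm
    have hb11N : blk11 H₀ (N z) = D z + C z ∘L Ring.inverse (A z) ∘L B z := by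
      have h : blk11 H₀ (N z) - blk10 H₀ (N z) ∘L schur00 H₀ (N z) ∘L blk01 H₀ (N z) = D z :=
        e11z
      rw [hb10N, e00z, hb01N, comp_ri_cancel_left hAuz (B z),
        ContinuousLinearMap.comp_assoc] at h
      exact eq_add_of_sub_eq h
    calc N z = assemble H₀ (blk00 H₀ (N z)) (blk01 H₀ (N z)) (blk10 H₀ (N z))
          (blk11 H₀ (N z)) := (assemble_blocks H₀ (N z)).symm
      _ = assembleM U H₀ A B C D z := by
          rw [hb00N, hb01N, hb10N, hb11N]; rfl
  have maps : Set.MapsTo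
      (fun M : ↥U → (H →L[ℂ] H) =>
        ((fun z : ↥U => schur00 H₀ (M z)), (fun z : ↥U => schur01 H₀ (M z)),
          (fun z : ↥U => schur10 H₀ (M z)), (fun z : ↥U => schur11 H₀ (M z))))
      (MUa U H₀ a00 a01 a10 a11)
      ((Aset U H₀ a00 a11) ×ˢ (Bset U H₀ a01) ×ˢ (Cset U H₀ a10) ×ˢ
        (Dset U H₀ a00 a11)) := by
    rintro M ⟨hMhol, hMz⟩
    have hu : ∀ z : ↥U, IsUnit (blk00 H₀ (M z)) := fun z => (hMz z).1.1
    refine ⟨⟨holFn_schur00 H₀ hMhol hu, fun z => ⟨isUnit_ri (hu z), ?_, (hMz z).2.2.1⟩⟩,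
      ⟨holFn_schur01 H₀ hMhol hu, fun z => (hMz z).2.2.2.2.1⟩,
      ⟨holFn_schur10 H₀ hMhol hu, fun z => (hMz z).2.2.2.1⟩,
      ⟨holFn_schur11 H₀ hMhol hu, fun z =>
        ⟨isUnit_of_reGE_ri _ (by positivity) (hMz z).2.2.2.2.2.2,
          (hMz z).2.2.2.2.2.1, (hMz z).2.2.2.2.2.2⟩⟩⟩
    have h : Ring.inverse (schur00 H₀ (M z)) = blk00 H₀ (M z) := ri_ri (hu z)
    rw [h]; exact (hMz z).2.1
  refine ⟨part1, maps, ?_, ?_⟩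
  · rintro M hM N hN h
    simp only [Prod.mk.injEq] at h
    obtain ⟨h1, h2, h3, h4⟩ := h
    obtain ⟨hA', hB', hC', hD'⟩ := maps hM
    have uniq := (part1 _ hA' _ hB' _ hC' _ hD').2.2.2.2.2.2.2
    have hMU : M ∈ MU U H₀ := ⟨hM.1, fun z => (hM.2 z).1⟩
    have hNU : N ∈ MU U H₀ := ⟨hN.1, fun z => (hN.2 z).1⟩
    rw [uniq M hMU rfl rfl rfl rfl, uniq N hNU h1.symm h2.symm h3.symm h4.symm]
  · rintro ⟨A, B, C, D⟩ ⟨hA', hB', hC', hD'⟩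
    have p := part1 A hA' B hB' C hC' D hD'
    refine ⟨assembleM U H₀ A B C D, p.2.2.1, ?_⟩
    simp only [p.2.2.2.1, p.2.2.2.2.1, p.2.2.2.2.2.1, p.2.2.2.2.2.2.1]

end Paper
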